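/- A principal ideal semidomain S is a Goldman-Krull semidomain (i.e., its semifield of fractions is finitely generated as a semiring over S) if and only if S has only finitely many prime ideals. -/

import Mathlib

private lemma pisd_nzd {S : Type*} [MulZeroClass S] [IsCancelMulZero S] :
    NoZeroDivisors S :=
  ⟨fun ab0 => or_iff_not_imp_left.mpr fun ha => mul_left_cancel₀ ha <|
    ab0.trans (mul_zero _).symm⟩

private lemma pisd_noeth {S : Type*} [CommSemiring S]
    (hpis : ∀ I : Ideal S, ∃ a : S, I = Ideal.span {a}) : IsNoetherian S S :=
  ⟨fun I => by obtain ⟨a, rfl⟩ := hpis I; exact ⟨{a}, by rw [Finset.coe_singleton]⟩⟩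

private lemma pisd_span_lt {S : Type*} [CommSemiring S] [IsCancelMulZero S] {a b p : S}
    (ha : a ≠ 0) (hp : ¬ IsUnit p) (hab : a = p * b) :
    Ideal.span {a} < Ideal.span ({b} : Set S) := by
  have hb0 : b ≠ 0 := fun h => ha (by simp [hab, h])
  refine lt_of_le_of_ne (Ideal.span_singleton_le_span_singleton.mpr ⟨p, by rw [hab]; ring⟩) ?_
  intro h
  obtain ⟨c, hc⟩ := Ideal.span_singleton_le_span_singleton.mp h.ge
  apply hp
  refine IsUnit.of_mul_eq_one (a := p) c ?_
  refine (mul_left_cancel₀ hb0 ?_).symm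
  rw [mul_one]
  conv_lhs => rw [hc, hab]
  ring

/-- In a cancellative commutative semiring with all ideals principal, only finitely many
prime ideals contain a given nonzero element. -/
private lemma pisd_finite_primes_mem {S : Type*} [CommSemiring S] [Nontrivial S]
    [IsCancelMulZero S] (hpis : ∀ I : Ideal S, ∃ a : S, I = Ideal.span {a}) :
    ∀ a : S, a ≠ 0 → {P : Ideal S | P.IsPrime ∧ a ∈ P}.Finite := by
  haveI : NoZeroDivisors S := pisd_nzd
  haveI := pisd_noeth hpis
  have wf : WellFounded ((· > ·) : Ideal S → Ideal S → Prop) :=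
    (isNoetherian_iff'.mp (pisd_noeth hpis)).wf
  suffices H : ∀ I : Ideal S, ∀ a : S, I = Ideal.span {a} → a ≠ 0 →
      {P : Ideal S | P.IsPrime ∧ a ∈ P}.Finite from fun a ha => H _ a rfl ha
  intro I
  refine wf.induction
    (C := fun I => ∀ a : S, I = Ideal.span {a} → a ≠ 0 →
      {P : Ideal S | P.IsPrime ∧ a ∈ P}.Finite) I ?_
  rintro J IH a rfl ha
  by_cases hex : ∃ P : Ideal S, P.IsPrime ∧ a ∈ P
  · obtain ⟨P₀, hP₀, haP₀⟩ := hex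
    obtain ⟨p, rfl⟩ := hpis P₀
    obtain ⟨b, hb⟩ := Ideal.mem_span_singleton.mp haP₀
    have hb0 : b ≠ 0 := fun h => ha (by simp [hb, h])
    have hp0 : p ≠ 0 := fun h => ha (by simp [hb, h])
    have hpu : ¬ IsUnit p := fun h => hP₀.ne_top (Ideal.span_singleton_eq_top.mpr h)
    have hlt := pisd_span_lt ha hpu hb
    have hfb := IH (Ideal.span {b}) hlt b rfl hb0
    have hprime : Prime p := by
      refine ⟨hp0, hpu, fun x y hxy => ?_⟩
      have := hP₀.mem_or_mem (Ideal.mem_span_singleton.mpr hxy)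
      simpa [Ideal.mem_span_singleton] using this
    have honly : {P : Ideal S | P.IsPrime ∧ p ∈ P} ⊆ {Ideal.span {p}} := by
      rintro P ⟨hP, hpP⟩
      obtain ⟨q, rfl⟩ := hpis P
      obtain ⟨c, hc⟩ := Ideal.mem_span_singleton.mp hpP
      rcases hprime.2.2 q c (hc ▸ dvd_refl p) with hq | hc2
      · simp only [Set.mem_singleton_iff]
        apply le_antisymm <;> rw [Ideal.span_singleton_le_span_singleton]
        · exact hq
        · exact ⟨c, hc⟩
      · obtain ⟨e, he⟩ := hc2
        exfalso
        apply hP.ne_top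
        rw [Ideal.span_singleton_eq_top]
        have hqe : p * (q * e) = p := by
          conv_rhs => rw [hc, he]
          ring
        exact IsUnit.of_mul_eq_one (a := q) e (mul_left_cancel₀ hp0 (hqe.trans (mul_one p).symm))
    refine Set.Finite.subset (hfb.union (Set.finite_singleton (Ideal.span {p}))) ?_
    rintro P ⟨hP, hPa⟩
    rcases hP.mem_or_mem (show p * b ∈ P from hb ▸ hPa) with h | h
    · exact Set.mem_union_right _ (honly ⟨hP, h⟩)
    · exact Set.mem_union_left _ ⟨hP, h⟩
  · exact Set.Finite.subset Set.finite_empty (fun P hP => (hex ⟨P, hP⟩).elim)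

/-- A principal ideal semidomain is a Goldman-Krull semidomain (its semifield
of fractions is finitely generated as a semiring over it) iff it has only finitely many
prime ideals. -/
theorem PISD_goldmanKrull_iff_finitely_many_primes {S K : Type*} [CommSemiring S]
    [Nontrivial S] [IsCancelMulZero S] [CommSemiring K] [Algebra S K]
    [IsLocalization (nonZeroDivisors S) K]
    (hpis : ∀ I : Ideal S, ∃ a : S, I = Ideal.span {a}) :
    (∃ T : Finset K, Subsemiring.closure (Set.range (algebraMap S K) ∪ T) = ⊤) ↔
      {P : Ideal S | P.IsPrime}.Finite := by
  classical
  haveI : NoZeroDivisors S := pisd_nzd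
  haveI := pisd_noeth hpis
  have wf : WellFounded ((· > ·) : Ideal S → Ideal S → Prop) :=
    (isNoetherian_iff'.mp (pisd_noeth hpis)).wf
  constructor
  · -- finitely generated ⟹ finitely many primes
    rintro ⟨T, hT⟩
    have hsurj : ∀ t : K, ∃ x : S × (nonZeroDivisors S),
        t * algebraMap S K x.2 = algebraMap S K x.1 :=
      fun t => IsLocalization.surj (nonZeroDivisors S) t
    choose f hf using hsurj
    set s : S := ∏ t ∈ T, ((f t).2 : S) with hs
    have hs0 : s ≠ 0 :=
      Finset.prod_ne_zero_iff.mpr fun t _ => mem_nonZeroDivisors_iff_ne_zero.mp (f t).2.2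
    -- every element of K becomes integral after multiplying by a power of s
    let R' : Subsemiring K :=
      { carrier := {x : K | ∃ (k : ℕ) (c : S),
          x * algebraMap S K (s ^ k) = algebraMap S K c}
        zero_mem' := ⟨0, 0, by simp⟩
        one_mem' := ⟨0, 1, by simp⟩
        add_mem' := by
          rintro x y ⟨k, c, hk⟩ ⟨m, d, hm⟩
          refine ⟨k + m, c * s ^ m + d * s ^ k, ?_⟩
          rw [map_add, map_mul, map_mul, ← hk, ← hm, pow_add, map_mul]
          ring
        mul_mem' := by
          rintro x y ⟨k, c, hk⟩ ⟨m, d, hm⟩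
          refine ⟨k + m, c * d, ?_⟩
          rw [map_mul, ← hk, ← hm, pow_add, map_mul]
          ring }
    have hR' : ∀ x : K, x ∈ R' := by
      have hle : Subsemiring.closure (Set.range (algebraMap S K) ∪ T) ≤ R' := by
        rw [Subsemiring.closure_le]
        rintro x (⟨c, rfl⟩ | hx)
        · exact ⟨0, c, by simp⟩
        · refine ⟨1, (f x).1 * ∏ t ∈ T.erase x, ((f t).2 : S), ?_⟩
          rw [pow_one, hs, ← Finset.mul_prod_erase T _ hx, map_mul, map_mul, ← mul_assoc,
            hf x, ← map_mul]
      intro x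
      exact hle (by rw [hT]; trivial)
    have hinj : Function.Injective (algebraMap S K) := by
      intro x y hxy
      obtain ⟨c, hc⟩ := (IsLocalization.eq_iff_exists (nonZeroDivisors S) K).mp hxy
      exact mul_left_cancel₀ (mem_nonZeroDivisors_iff_ne_zero.mp c.2) hc
    have hprimes : ∀ P : Ideal S, P.IsPrime → P ≠ ⊥ → s ∈ P := by
      intro P hP hPb
      obtain ⟨a, haP, ha0⟩ := Submodule.exists_mem_ne_zero_of_ne_bot hPb
      have haM : a ∈ nonZeroDivisors S := mem_nonZeroDivisors_iff_ne_zero.mpr ha0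
      set sa : nonZeroDivisors S := ⟨a, haM⟩ with hsa
      obtain ⟨k, c, hk⟩ := hR' (IsLocalization.mk' K 1 sa)
      have hspec : IsLocalization.mk' K 1 sa * algebraMap S K (sa : S) = 1 := by
        have := IsLocalization.mk'_spec K 1 sa
        simpa using this
      have heq : algebraMap S K (s ^ k) = algebraMap S K (c * a) := by
        rw [map_mul, ← hk, mul_right_comm]
        have : (algebraMap S K a) = algebraMap S K (sa : S) := rfl
        rw [this, hspec, one_mul]
      have hca : s ^ k = c * a := hinj heq
      have hsk : s ^ k ∈ P := hca ▸ P.mul_mem_left c haP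
      exact hP.mem_of_pow_mem k hsk
    refine Set.Finite.subset ((pisd_finite_primes_mem hpis s hs0).insert ⊥) ?_
    intro P hP
    by_cases h : P = ⊥
    · exact h ▸ Set.mem_insert _ _
    · exact Set.mem_insert_of_mem _ ⟨hP, hprimes P hP h⟩
  · -- finitely many primes ⟹ finitely generated
    intro hfin
    choose g hg using hpis
    set F : Finset (Ideal S) := hfin.toFinset.filter (· ≠ ⊥) with hF
    set s : S := ∏ P ∈ F, g P with hs
    have hs0 : s ≠ 0 := by
      rw [hs]
      refine Finset.prod_ne_zero_iff.mpr fun P hPF h0 => ?_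
      have hPb : P ≠ ⊥ := by
        rw [hF] at hPF
        exact (Finset.mem_filter.mp hPF).2
      apply hPb
      rw [hg P, h0]
      exact Ideal.span_singleton_eq_bot.mpr rfl
    have hdvd : ∀ a : S, a ≠ 0 → ∃ k : ℕ, a ∣ s ^ k := by
      suffices H : ∀ I : Ideal S, ∀ a : S, I = Ideal.span {a} → a ≠ 0 → ∃ k : ℕ, a ∣ s ^ k from
        fun a ha => H _ a rfl ha
      intro I
      refine wf.induction
        (C := fun I => ∀ a : S, I = Ideal.span {a} → a ≠ 0 → ∃ k : ℕ, a ∣ s ^ k) I ?_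
      rintro J IH a rfl ha
      by_cases hu : IsUnit a
      · exact ⟨0, by simpa using hu.dvd⟩
      · have hne : Ideal.span {a} ≠ ⊤ := fun h => hu (Ideal.span_singleton_eq_top.mp h)
        obtain ⟨M, hM, hle⟩ := Ideal.exists_le_maximal _ hne
        have hMP : M.IsPrime := hM.isPrime
        have haM : a ∈ M := hle (Ideal.subset_span rfl)
        have hMb : M ≠ ⊥ := fun h => ha (by rw [h] at haM; simpa using haM)
        have hMF : M ∈ F := by
          rw [hF]
          simp only [Finset.mem_filter, Set.Finite.mem_toFinset]
          exact ⟨hMP, hMb⟩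
        obtain ⟨b, hb⟩ := Ideal.mem_span_singleton.mp (show a ∈ Ideal.span {g M} from hg M ▸ haM)
        have hb0 : b ≠ 0 := fun h => ha (by simp [hb, h])
        have hpu : ¬ IsUnit (g M) := fun h =>
          hMP.ne_top (by rw [hg M]; exact Ideal.span_singleton_eq_top.mpr h)
        obtain ⟨k, hk⟩ := IH (Ideal.span {b}) (pisd_span_lt ha hpu hb) b rfl hb0
        refine ⟨k + 1, ?_⟩
        rw [hb, pow_succ']
        exact mul_dvd_mul (Finset.dvd_prod_of_mem g hMF) hk
    have hsM : s ∈ nonZeroDivisors S := mem_nonZeroDivisors_iff_ne_zero.mpr hs0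
    set invS : K := IsLocalization.mk' K 1 (⟨s, hsM⟩ : nonZeroDivisors S) with hinvS
    have hinv : invS * algebraMap S K s = 1 := by
      have h := IsLocalization.mk'_spec K 1 (⟨s, hsM⟩ : nonZeroDivisors S)
      rw [map_one] at h
      exact h
    refine ⟨{invS}, ?_⟩
    rw [eq_top_iff]
    rintro x -
    obtain ⟨⟨a, t⟩, rfl⟩ := IsLocalization.mk'_surjective (nonZeroDivisors S) x
    have ht0 : (t : S) ≠ 0 := mem_nonZeroDivisors_iff_ne_zero.mp t.2
    obtain ⟨k, hk⟩ := hdvd t ht0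
    obtain ⟨u, hu⟩ := hk
    have h1 : IsLocalization.mk' K a t * algebraMap S K (t : S) = algebraMap S K a :=
      IsLocalization.mk'_spec K a t
    have h2 : algebraMap S K (t : S) * algebraMap S K u * invS ^ k = 1 := by
      rw [← map_mul, ← hu, map_pow, ← mul_pow, mul_comm (algebraMap S K s) invS, hinv, one_pow]
    have key : IsLocalization.mk' K a t = algebraMap S K a * algebraMap S K u * invS ^ k := by
      calc IsLocalization.mk' K a t
          = IsLocalization.mk' K a t *
            (algebraMap S K (t : S) * algebraMap S K u * invS ^ k) := by rw [h2, mul_one]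
        _ = (IsLocalization.mk' K a t * algebraMap S K (t : S)) *
            (algebraMap S K u * invS ^ k) := by ring
        _ = algebraMap S K a * (algebraMap S K u * invS ^ k) := by rw [h1]
        _ = algebraMap S K a * algebraMap S K u * invS ^ k := by ring
    show IsLocalization.mk' K a t ∈ _; rw [key]
    refine Subsemiring.mul_mem _ (Subsemiring.mul_mem _ ?_ ?_) ?_
    · exact Subsemiring.subset_closure (Set.mem_union_left _ ⟨a, rfl⟩)
    · exact Subsemiring.subset_closure (Set.mem_union_left _ ⟨u, rfl⟩)
    · exact Subsemiring.pow_mem _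
        (Subsemiring.subset_closure (Set.mem_union_right _ (by simp))) k
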